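/- Let 0 < δ < 1, K ≥ 0, b ≥ 0 be real numbers and set C(δ) := (δ − 1 − Real.log δ)/(Real.log δ)². Let f, f', f'' : ℝ → ℝ be functions such that for every s ∈ [0,1], f has derivative f'(s) at s and f' has derivative f''(s) at s. Assume f''(s) ≥ δ^s · K for all s ∈ [0,1] (with δ^s the real power), and f'(0) ≥ −b·√K. Then f(1) − f(0) ≥ C(δ)·K − b·√K, and consequently f(1) − f(0) ≥ −b²/(4·C(δ)). -/

import Mathlib

/-- Analytic skeleton of the lower bound for the Donaldson functional on δ-bounded metrics:
if `f'' s ≥ δ^s · K` on `[0,1]` and `f' 0 ≥ -b·√K`, then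
`f 1 - f 0 ≥ C(δ)·K - b·√K ≥ -b²/(4·C(δ))` with `C(δ) = (δ - 1 - log δ)/(log δ)²`. -/
theorem stmt_9 (δ K b : ℝ) (hδ0 : 0 < δ) (hδ1 : δ < 1) (hK : 0 ≤ K) (hb : 0 ≤ b)
    (C : ℝ) (hC : C = (δ - 1 - Real.log δ) / (Real.log δ) ^ 2)
    (f f' f'' : ℝ → ℝ)
    (hf : ∀ s ∈ Set.Icc (0 : ℝ) 1, HasDerivAt f (f' s) s)
    (hf' : ∀ s ∈ Set.Icc (0 : ℝ) 1, HasDerivAt f' (f'' s) s)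
    (hf'' : ∀ s ∈ Set.Icc (0 : ℝ) 1, f'' s ≥ δ ^ s * K)
    (hf'0 : f' 0 ≥ -b * Real.sqrt K) :
    f 1 - f 0 ≥ C * K - b * Real.sqrt K ∧ f 1 - f 0 ≥ -b ^ 2 / (4 * C) := by
  have hlog : Real.log δ < 0 := Real.log_neg hδ0 hδ1
  have hlogne : Real.log δ ≠ 0 := ne_of_lt hlog
  have hCpos : 0 < C := by
    rw [hC]
    apply div_pos
    · have := Real.log_lt_sub_one_of_pos hδ0 (ne_of_lt hδ1)
      linarith
    · positivity
  -- auxiliary function g s = f s - K * δ^s / (log δ)^2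
  set g : ℝ → ℝ := fun s => f s - K * δ ^ s / (Real.log δ) ^ 2 with hgdef
  set gd : ℝ → ℝ := fun s => f' s - K * δ ^ s / Real.log δ with hgddef
  have hrpow : ∀ s : ℝ, HasDerivAt (fun x : ℝ => δ ^ x) (δ ^ s * Real.log δ) s := by
    intro s
    exact (Real.hasStrictDerivAt_const_rpow hδ0 s).hasDerivAt
  have hgderiv : ∀ s ∈ Set.Icc (0 : ℝ) 1, HasDerivAt g (gd s) s := by
    intro s hs
    have h1 : HasDerivAt (fun x : ℝ => K * δ ^ x / (Real.log δ) ^ 2)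
        (K * δ ^ s / Real.log δ) s := by
      have := ((hrpow s).const_mul K).div_const ((Real.log δ) ^ 2)
      have e : K * δ ^ s / Real.log δ = K * (δ ^ s * Real.log δ) / Real.log δ ^ 2 := by
        rw [div_eq_div_iff hlogne (pow_ne_zero 2 hlogne)]
        ring
      rw [e]; exact this
    exact (hf s hs).sub h1
  have hgdderiv : ∀ s ∈ Set.Icc (0 : ℝ) 1, HasDerivAt gd (f'' s - δ ^ s * K) s := by
    intro s hs
    have h1 : HasDerivAt (fun x : ℝ => K * δ ^ x / Real.log δ) (δ ^ s * K) s := by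
      have := ((hrpow s).const_mul K).div_const (Real.log δ)
      have e : δ ^ s * K = K * (δ ^ s * Real.log δ) / Real.log δ := by
        rw [eq_div_iff hlogne]
        ring
      rw [e]; exact this
    exact (hf' s hs).sub h1
  -- MVT for g on [0,1]
  have hgcont : ContinuousOn g (Set.Icc 0 1) := fun s hs =>
    (hgderiv s hs).continuousAt.continuousWithinAt
  obtain ⟨c, hc, hceq⟩ := exists_hasDerivAt_eq_slope g gd one_pos hgcont
    (fun x hx => hgderiv x (Set.mem_Icc.2 ⟨le_of_lt hx.1, le_of_lt hx.2⟩))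
  -- gd c ≥ gd 0 via MVT on [0, c]
  have hgdcontc : ContinuousOn gd (Set.Icc 0 c) := fun s hs =>
    (hgdderiv s ⟨hs.1, le_trans hs.2 (le_of_lt hc.2)⟩).continuousAt.continuousWithinAt
  obtain ⟨d, hd, hdeq⟩ := exists_hasDerivAt_eq_slope gd (fun s => f'' s - δ ^ s * K) hc.1
    hgdcontc
    (fun x hx => hgdderiv x ⟨le_of_lt hx.1, le_of_lt (lt_of_lt_of_le hx.2 (le_of_lt hc.2))⟩)
  have hdIcc : d ∈ Set.Icc (0 : ℝ) 1 :=
    ⟨le_of_lt hd.1, le_of_lt (lt_of_lt_of_le hd.2 (le_of_lt hc.2))⟩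
  have hgdmono : gd c ≥ gd 0 := by
    have h1 : f'' d - δ ^ d * K ≥ 0 := by have := hf'' d hdIcc; linarith
    have h2 : (gd c - gd 0) / (c - 0) ≥ 0 := by rw [← hdeq]; exact h1
    have hcpos : 0 < c - 0 := by linarith [hc.1]
    rcases div_nonneg_iff.mp h2 with ⟨h3, _⟩ | ⟨_, h4⟩
    · linarith
    · linarith
  -- gd 0 lower bound
  have hδ00 : δ ^ (0 : ℝ) = 1 := Real.rpow_zero δ
  have hδ11 : δ ^ (1 : ℝ) = δ := Real.rpow_one δ
  have hgd0 : gd 0 ≥ -b * Real.sqrt K - K / Real.log δ := by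
    simp only [hgddef, hδ00, mul_one]
    linarith [hf'0]
  -- combine
  have hslope : g 1 - g 0 = gd c := by
    have h := hceq
    simp only [sub_zero, div_one] at h
    linarith [h]
  have hkey : f 1 - f 0 ≥ C * K - b * Real.sqrt K := by
    have hexp : f 1 - f 0 = (g 1 - g 0) + K * δ / (Real.log δ) ^ 2 - K / (Real.log δ) ^ 2 := by
      simp only [hgdef, hδ00, hδ11]; ring
    have hCK : C * K = K * δ / (Real.log δ) ^ 2 - K / (Real.log δ) ^ 2 - K / Real.log δ := by
      rw [hC]; field_simp
    rw [hexp, hslope]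
    have := le_trans hgd0 hgdmono
    linarith [hCK, this]
  refine ⟨hkey, ?_⟩
  have hsq : Real.sqrt K ^ 2 = K := Real.sq_sqrt hK
  have h2 : C * K - b * Real.sqrt K ≥ -b ^ 2 / (4 * C) := by
    rw [ge_iff_le, div_le_iff₀ (by positivity)]
    have hid : (C * K - b * Real.sqrt K) * (4 * C)
        = (2 * C * Real.sqrt K - b) ^ 2 - b ^ 2 + 4 * C ^ 2 * (K - Real.sqrt K ^ 2) := by
      ring
    have h0 : K - Real.sqrt K ^ 2 = 0 := by rw [hsq]; ring
    rw [hid, h0]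
    nlinarith [sq_nonneg (2 * C * Real.sqrt K - b)]
  linarith [hkey, h2]
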